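/- Let α = (α_n) and β = (β_n) be Cantor real bases such that ∏_{i=0}^n α_i ≤ ∏_{i=0}^n β_i for all n ∈ ℕ. Then for all x ∈ [0,1], d_α(x) ≤_lex d_β(x). -/

import Mathlib

open Filter

/-- Product of the first `n+1` terms of the base sequence. -/
noncomputable def cprod (β : ℕ → ℝ) (n : ℕ) : ℝ := ∏ i ∈ Finset.range (n+1), β i

/-- A Cantor real base: all terms exceed 1 and the partial products tend to infinity. -/
def IsCantorBase (β : ℕ → ℝ) : Prop :=
  (∀ n, 1 < β n) ∧ Tendsto (cprod β) atTop atTop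

/-- Value of a real-digit sequence in a Cantor base. -/
noncomputable def valB (β : ℕ → ℝ) (a : ℕ → ℝ) : ℝ := ∑' n, a n / cprod β n

/-- Value of a natural-digit sequence in a Cantor base. -/
noncomputable def valN (β : ℕ → ℝ) (a : ℕ → ℕ) : ℝ := valB β (fun n => (a n : ℝ))

/-- Remainders of the greedy algorithm. -/
noncomputable def greedyRem (β : ℕ → ℝ) (x : ℝ) : ℕ → ℝ
  | 0 => β 0 * x - ⌊β 0 * x⌋
  | n+1 => β (n+1) * greedyRem β x n - ⌊β (n+1) * greedyRem β x n⌋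

/-- Digits of the greedy expansion. -/
noncomputable def greedy (β : ℕ → ℝ) (x : ℝ) : ℕ → ℕ
  | 0 => (⌊β 0 * x⌋).toNat
  | n+1 => (⌊β (n+1) * greedyRem β x n⌋).toNat

/-- Remainders of the quasi-greedy algorithm started at `1`:
at each step the largest digit keeping the remainder strictly positive is chosen. -/
noncomputable def qRem (β : ℕ → ℝ) : ℕ → ℝ
  | 0 => β 0 - (⌈β 0⌉ - 1)
  | n+1 => β (n+1) * qRem β n - (⌈β (n+1) * qRem β n⌉ - 1)

/-- Digits of the quasi-greedy expansion of `1`. -/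
noncomputable def quasiGreedy (β : ℕ → ℝ) : ℕ → ℕ
  | 0 => (⌈β 0⌉ - 1).toNat
  | n+1 => (⌈β (n+1) * qRem β n⌉ - 1).toNat

/-- The `n`-shifted base `β^{(n)}`. -/
def shiftBase (β : ℕ → ℝ) (n : ℕ) : ℕ → ℝ := fun k => β (n + k)

/-- The `n`-fold shift `σ^n` of a digit sequence. -/
def shiftSeq (a : ℕ → ℕ) (n : ℕ) : ℕ → ℕ := fun k => a (n + k)

/-- Strict lexicographic order on digit sequences. -/
def LexLt (a b : ℕ → ℕ) : Prop := ∃ ℓ, (∀ k, k < ℓ → a k = b k) ∧ a ℓ < b ℓ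

/-- Lexicographic order on digit sequences. -/
def LexLe (a b : ℕ → ℕ) : Prop := LexLt a b ∨ a = b

/-- The set of greedy expansions of points of `[0,1)`. -/
def Dset (β : ℕ → ℝ) : Set (ℕ → ℕ) := {a | ∃ x ∈ Set.Ico (0:ℝ) 1, a = greedy β x}

lemma cprod_pos {β : ℕ → ℝ} (hβ : ∀ n, 1 < β n) (n : ℕ) : 0 < cprod β n :=
  Finset.prod_pos fun i _ => lt_trans one_pos (hβ i)

lemma sub_floor_nonneg' (t : ℝ) : 0 ≤ t - ⌊t⌋ := sub_nonneg.2 (Int.floor_le t)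

lemma sub_floor_lt_one' (t : ℝ) : t - ⌊t⌋ < 1 := by linarith [Int.lt_floor_add_one t]

lemma rem_nonneg (β : ℕ → ℝ) (x : ℝ) (n : ℕ) : 0 ≤ greedyRem β x n := by
  cases n with
  | zero => exact sub_floor_nonneg' _
  | succ n => exact sub_floor_nonneg' _

lemma rem_lt_one (β : ℕ → ℝ) (x : ℝ) (n : ℕ) : greedyRem β x n < 1 := by
  cases n with
  | zero => exact sub_floor_lt_one' _
  | succ n => exact sub_floor_lt_one' _

lemma greedy_cast_zero {β : ℕ → ℝ} {x : ℝ} (hβ0 : 0 < β 0) (hx : 0 ≤ x) :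
    (greedy β x 0 : ℝ) = β 0 * x - greedyRem β x 0 := by
  have h0 : (0:ℤ) ≤ ⌊β 0 * x⌋ := Int.floor_nonneg.2 (mul_nonneg hβ0.le hx)
  have hcast : (((⌊β 0 * x⌋).toNat : ℕ) : ℝ) = ((⌊β 0 * x⌋ : ℤ) : ℝ) := by
    exact_mod_cast Int.toNat_of_nonneg h0
  show (((⌊β 0 * x⌋).toNat : ℕ) : ℝ) = β 0 * x - (β 0 * x - ⌊β 0 * x⌋)
  rw [hcast]; ring

lemma greedy_cast_succ {β : ℕ → ℝ} {x : ℝ} (n : ℕ) (hβ : 0 < β (n+1)) :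
    (greedy β x (n+1) : ℝ)
      = β (n+1) * greedyRem β x n - greedyRem β x (n+1) := by
  have h0 : (0:ℤ) ≤ ⌊β (n+1) * greedyRem β x n⌋ :=
    Int.floor_nonneg.2 (mul_nonneg hβ.le (rem_nonneg β x n))
  have hcast : (((⌊β (n+1) * greedyRem β x n⌋).toNat : ℕ) : ℝ)
      = ((⌊β (n+1) * greedyRem β x n⌋ : ℤ) : ℝ) := by
    exact_mod_cast Int.toNat_of_nonneg h0
  show (((⌊β (n+1) * greedyRem β x n⌋).toNat : ℕ) : ℝ)
      = β (n+1) * greedyRem β x n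
        - (β (n+1) * greedyRem β x n - ⌊β (n+1) * greedyRem β x n⌋)
  rw [hcast]; ring

lemma greedy_identity {β : ℕ → ℝ} {x : ℝ} (hβ : ∀ n, 1 < β n) (hx : 0 ≤ x) (n : ℕ) :
    x = (∑ k ∈ Finset.range (n+1), (greedy β x k : ℝ) / cprod β k)
        + greedyRem β x n / cprod β n := by
  induction n with
  | zero =>
    have hc : cprod β 0 = β 0 := by simp [cprod]
    have hβ0 : 0 < β 0 := lt_trans one_pos (hβ 0)
    rw [Finset.sum_range_one, hc, greedy_cast_zero hβ0 hx]
    field_simp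
    ring
  | succ n ih =>
    have hc : cprod β (n+1) = cprod β n * β (n+1) := by
      simp [cprod, Finset.prod_range_succ]
    have hβp : 0 < β (n+1) := lt_trans one_pos (hβ (n+1))
    have hcp : 0 < cprod β n := cprod_pos hβ n
    rw [Finset.sum_range_succ, greedy_cast_succ n hβp, hc]
    conv_lhs => rw [ih]
    field_simp
    ring

theorem stmt_10 (α β : ℕ → ℝ) (hα : IsCantorBase α) (hβ : IsCantorBase β)
    (h : ∀ n, cprod α n ≤ cprod β n) (x : ℝ) (hx : x ∈ Set.Icc (0:ℝ) 1) :
    LexLe (greedy α x) (greedy β x) := by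
  classical
  obtain ⟨hx0, _⟩ := hx
  set a := greedy α x with ha
  set b := greedy β x with hb
  by_cases hab : a = b
  · exact Or.inr hab
  left
  have hne : ∃ n, a n ≠ b n := Function.ne_iff.1 hab
  set ℓ := Nat.find hne with hℓdef
  have hℓ : a ℓ ≠ b ℓ := Nat.find_spec hne
  have hmin : ∀ k, k < ℓ → a k = b k := fun k hk => not_not.1 (Nat.find_min hne hk)
  rcases lt_trichotomy (a ℓ) (b ℓ) with hlt | heq | hgt
  · exact ⟨ℓ, hmin, hlt⟩
  · exact absurd heq hℓ
  exfalso
  have hApos : ∀ n, 0 < cprod α n := cprod_pos hα.1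
  have hBpos : ∀ n, 0 < cprod β n := cprod_pos hβ.1
  have hIα := greedy_identity hα.1 hx0 ℓ
  have hIβ := greedy_identity hβ.1 hx0 ℓ
  rw [Finset.sum_range_succ] at hIα hIβ
  rw [← ha] at hIα
  rw [← hb] at hIβ
  -- partial sums comparison
  have hsum : (∑ k ∈ Finset.range ℓ, (b k : ℝ) / cprod β k)
      ≤ ∑ k ∈ Finset.range ℓ, (a k : ℝ) / cprod α k := by
    apply Finset.sum_le_sum
    intro k hk
    rw [← hmin k (Finset.mem_range.1 hk)]
    exact div_le_div_of_nonneg_left (Nat.cast_nonneg _) (hApos k) (h k)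
  have hrα : 0 ≤ greedyRem α x ℓ := rem_nonneg α x ℓ
  have hrβ : greedyRem β x ℓ < 1 := rem_lt_one β x ℓ
  have hrβ0 : 0 ≤ greedyRem β x ℓ := rem_nonneg β x ℓ
  have h1 : (∑ k ∈ Finset.range ℓ, (b k : ℝ) / cprod β k) + (a ℓ : ℝ) / cprod α ℓ ≤ x := by
    have : 0 ≤ greedyRem α x ℓ / cprod α ℓ := div_nonneg hrα (hApos ℓ).le
    linarith [hsum]
  have h2 : x < (∑ k ∈ Finset.range ℓ, (b k : ℝ) / cprod β k) + (a ℓ : ℝ) / cprod α ℓ := by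
    have hstep : (b ℓ : ℝ) / cprod β ℓ + greedyRem β x ℓ / cprod β ℓ
        < (a ℓ : ℝ) / cprod α ℓ := by
      have hcast : (b ℓ : ℝ) + 1 ≤ (a ℓ : ℝ) := by exact_mod_cast Nat.succ_le_of_lt hgt
      have e1 : (b ℓ : ℝ) / cprod β ℓ + greedyRem β x ℓ / cprod β ℓ
          = ((b ℓ : ℝ) + greedyRem β x ℓ) / cprod β ℓ := by ring
      rw [e1]
      have e2 : ((b ℓ : ℝ) + greedyRem β x ℓ) / cprod β ℓ < (a ℓ : ℝ) / cprod β ℓ :=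
        (div_lt_div_iff_of_pos_right (hBpos ℓ)).2 (by linarith)
      have e3 : (a ℓ : ℝ) / cprod β ℓ ≤ (a ℓ : ℝ) / cprod α ℓ :=
        div_le_div_of_nonneg_left (Nat.cast_nonneg _) (hApos ℓ) (h ℓ)
      linarith
    linarith [hIβ]
  linarith
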